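/- Let 𝒜 be an abelian category. Suppose given a commutative diagram consisting of three exact rows 0 → F' →ᵃ F →ᵈ F'' → 0, 0 → E' →ᵇ E →ᵉ E'' → 0, 0 → G' →ᶜ G →ᶠ G'' → 0 and three exact columns 0 → F' →^{j'} E' →^{π} G' → 0, 0 → F →ʲ E →^{q} G → 0, 0 → F'' →^{j''} E'' →^{q''} G'' → 0, together with morphisms s : E'' → E and r : E → E' splitting the middle row, i.e. e∘s = id_{E''}, r∘b = id_{E'}, and b∘r + s∘e = id_E. Then: (i) the composite q∘s∘j'' : F'' → G factors (necessarily uniquely) through the monomorphism c : G' → G, yielding a morphism δ : F'' → G'; (ii) the composite π∘r∘j : F → G' satisfies π∘r∘j∘a = 0, hence factors uniquely through the epimorphism d : F → F'', yielding a morphism ε : F'' → G'; and (iii) ε = −δ. -/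
import Mathlib


/-- (Formalized, as the context allows, in the abelian category of
modules over a ring `R`.)  Given a commutative `3 × 3` diagram with exact rows
`0 → F' →ᵃ F →ᵈ F'' → 0`, `0 → E' →ᵇ E →ᵉ E'' → 0`, `0 → G' →ᶜ G →ᶠ G'' → 0`
and exact columns `0 → F' →ʲ' E' →^π G' → 0`, `0 → F →ʲ E →^q G → 0`,
`0 → F'' →ʲ'' E'' →^{q''} G'' → 0`, together with a splitting `r : E → E'`,
`s : E'' → E` of the middle row (`r∘b = id`, `e∘s = id`, `b∘r + s∘e = id`), we have:
(i) the composite `q∘s∘j'' : F'' → G` factors (necessarily uniquely) through the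
monomorphism `c : G' → G`, yielding `δ : F'' → G'`;
(ii) the composite `π∘r∘j : F → G'` kills the image of `a`, hence factors uniquely
through the epimorphism `d : F → F''`, yielding `ε : F'' → G'`;
(iii) `ε = −δ`. -/
theorem three_by_three_splitting_delta
    {R : Type*} [Ring R]
    {F' F F'' E' E E'' G' G G'' : Type*}
    [AddCommGroup F'] [AddCommGroup F] [AddCommGroup F'']
    [AddCommGroup E'] [AddCommGroup E] [AddCommGroup E'']
    [AddCommGroup G'] [AddCommGroup G] [AddCommGroup G'']
    [Module R F'] [Module R F] [Module R F'']
    [Module R E'] [Module R E] [Module R E'']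
    [Module R G'] [Module R G] [Module R G'']
    -- rows
    (a : F' →ₗ[R] F) (d : F →ₗ[R] F'')
    (b : E' →ₗ[R] E) (e : E →ₗ[R] E'')
    (c : G' →ₗ[R] G) (f : G →ₗ[R] G'')
    -- columns
    (j' : F' →ₗ[R] E') (π : E' →ₗ[R] G')
    (j : F →ₗ[R] E) (q : E →ₗ[R] G)
    (j'' : F'' →ₗ[R] E'') (q'' : E'' →ₗ[R] G'')
    -- exactness of the rows
    (ha : Function.Injective a) (had : Function.Exact a d) (hd : Function.Surjective d)
    (hb : Function.Injective b) (hbe : Function.Exact b e) (he : Function.Surjective e)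
    (hc : Function.Injective c) (hcf : Function.Exact c f) (hf : Function.Surjective f)
    -- exactness of the columns
    (hj' : Function.Injective j') (hπ' : Function.Exact j' π) (hπ : Function.Surjective π)
    (hj : Function.Injective j) (hq' : Function.Exact j q) (hq : Function.Surjective q)
    (hj'' : Function.Injective j'') (hq''e : Function.Exact j'' q'')
    (hq'' : Function.Surjective q'')
    -- commutativity of the solid diagram
    (hcomm₁ : j ∘ₗ a = b ∘ₗ j') (hcomm₂ : j'' ∘ₗ d = e ∘ₗ j)
    (hcomm₃ : q ∘ₗ b = c ∘ₗ π) (hcomm₄ : q'' ∘ₗ e = f ∘ₗ q)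
    -- the splitting of the middle row
    (r : E →ₗ[R] E') (s : E'' →ₗ[R] E)
    (hr : r ∘ₗ b = LinearMap.id) (hs : e ∘ₗ s = LinearMap.id)
    (hsplit : b ∘ₗ r + s ∘ₗ e = LinearMap.id) :
    (∃! δ : F'' →ₗ[R] G', c ∘ₗ δ = q ∘ₗ s ∘ₗ j'') ∧
      (π ∘ₗ r ∘ₗ j ∘ₗ a = 0) ∧
      (∃! ε : F'' →ₗ[R] G', ε ∘ₗ d = π ∘ₗ r ∘ₗ j) ∧
      (∀ δ ε : F'' →ₗ[R] G',
        c ∘ₗ δ = q ∘ₗ s ∘ₗ j'' → ε ∘ₗ d = π ∘ₗ r ∘ₗ j → ε = -δ) := by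

  have hqj : ∀ x, q (j x) = 0 := fun x => hq'.apply_apply_eq_zero x
  have hπj' : ∀ x, π (j' x) = 0 := fun x => hπ'.apply_apply_eq_zero x
  have hrb : ∀ x, r (b x) = x := fun x => LinearMap.congr_fun hr x
  have hc₁ : ∀ x, j (a x) = b (j' x) := fun x => LinearMap.congr_fun hcomm₁ x
  have hc₂ : ∀ x, j'' (d x) = e (j x) := fun x => LinearMap.congr_fun hcomm₂ x
  have hc₃ : ∀ x, q (b x) = c (π x) := fun x => LinearMap.congr_fun hcomm₃ x
  have hsp : ∀ x, b (r x) + s (e x) = x := fun x => LinearMap.congr_fun hsplit x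
  -- (ii) π∘r∘j∘a = 0
  have hzero : π ∘ₗ r ∘ₗ j ∘ₗ a = 0 := by
    ext x
    simp only [LinearMap.comp_apply, LinearMap.zero_apply, hc₁, hrb, hπj']
  -- kernel condition for ε
  have hker : LinearMap.ker d ≤ LinearMap.ker (π ∘ₗ r ∘ₗ j) := by
    intro x hx
    obtain ⟨y, rfl⟩ := (had x).mp hx
    simpa using LinearMap.congr_fun hzero y
  -- construct ε
  set ε : F'' →ₗ[R] G' :=
    (LinearMap.ker d).liftQ (π ∘ₗ r ∘ₗ j) hker ∘ₗ
      (d.quotKerEquivOfSurjective hd).symm.toLinearMap with hεdef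
  have hε : ε ∘ₗ d = π ∘ₗ r ∘ₗ j := by
    ext x
    have h1 : (d.quotKerEquivOfSurjective hd).symm (d x) = Submodule.Quotient.mk x := by
      apply (d.quotKerEquivOfSurjective hd).injective
      simp [LinearMap.quotKerEquivOfSurjective, LinearMap.quotKerEquivRange]
    simp [hεdef, LinearMap.comp_apply, h1]
  -- δ := -ε works
  have hδ : c ∘ₗ (-ε) = q ∘ₗ s ∘ₗ j'' := by
    ext x''
    obtain ⟨x, rfl⟩ := hd x''
    have h2 : ε (d x) = π (r (j x)) := LinearMap.congr_fun hε x
    have h3 : s (j'' (d x)) = j x - b (r (j x)) := by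
      rw [hc₂]
      exact eq_sub_of_add_eq' (hsp (j x))
    simp only [LinearMap.comp_apply, LinearMap.neg_apply, map_neg, h2, ← hc₃, h3, map_sub,
      hqj, zero_sub, neg_neg]
  refine ⟨⟨-ε, hδ, ?_⟩, hzero, ⟨ε, hε, ?_⟩, ?_⟩
  · intro δ' hδ'
    ext x''
    exact hc (by rw [← LinearMap.comp_apply, hδ', ← hδ, LinearMap.comp_apply])
  · intro ε' hε'
    ext x''
    obtain ⟨x, rfl⟩ := hd x''
    rw [← LinearMap.comp_apply, hε', ← hε, LinearMap.comp_apply]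
  · intro δ' ε' hδ' hε'
    ext x''
    obtain ⟨x, rfl⟩ := hd x''
    apply hc
    have h2 : ε' (d x) = π (r (j x)) := LinearMap.congr_fun hε' x
    have h3 : c (δ' (d x)) = q (s (j'' (d x))) := LinearMap.congr_fun hδ' (d x)
    have h4 : s (j'' (d x)) = j x - b (r (j x)) := by
      rw [hc₂]
      exact eq_sub_of_add_eq' (hsp (j x))
    simp only [LinearMap.neg_apply, map_neg, h2, h3, h4, map_sub, hqj, zero_sub, hc₃, neg_neg]
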